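/- Let Φ : ℝ^d → ℝ be C² with ∇Φ(0) = 0, Φ(0) = −μ < 0, and with Hessian bounds c₁‖v‖² ≤ ⟨D²Φ(w)v, v⟩ ≤ c₂‖v‖² for all ‖w‖ ≤ m and all v. Let r, r̄ : ℝ^+ → ℝ^+ satisfy r(t) = o(r̄(t)), r̄(t) = o(t), and √t / r̄(t) → 0. Then exp(t·Φ(y(t)/t) − t·Φ(ȳ(t)/t)) → 0 as t → ∞, uniformly over ‖y(t)‖ ≤ r(t) and ‖ȳ(t)‖ ≥ r̄(t). -/

import Mathlib

open Real Filter Topology Asymptotics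
open InnerProductSpace

section aux
variable {d : ℕ}
variable {d : ℕ}

-- monotone helper
lemma mono_aux {F F' : ℝ → ℝ} (hF : ∀ s, HasDerivAt F (F' s) s)
    (h0 : ∀ s ∈ Set.Icc (0:ℝ) 1, 0 ≤ F' s) {a : ℝ} (ha : a ∈ Set.Icc (0:ℝ) 1) :
    F 0 ≤ F a := by
  have hmono : MonotoneOn F (Set.Icc (0:ℝ) 1) := by
    apply monotoneOn_of_deriv_nonneg (convex_Icc 0 1)
      (fun s _ => (hF s).continuousAt.continuousWithinAt)
      (fun s hs => ((hF s).differentiableAt).differentiableWithinAt)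
    intro s hs
    rw [(hF s).deriv]
    exact h0 s (Set.mem_Icc_of_Ioo (by simpa using hs))
  exact hmono (Set.left_mem_Icc.2 zero_le_one) ha ha.1

lemma taylor_bounds (Φ : EuclideanSpace ℝ (Fin d) → ℝ)
    (hΦ : ContDiff ℝ 2 Φ)
    (hgrad0 : gradient Φ 0 = 0)
    (m c₁ c₂ : ℝ)
    (hhess : ∀ w : EuclideanSpace ℝ (Fin d), ‖w‖ ≤ m →
      ∀ v : EuclideanSpace ℝ (Fin d),
        c₁ * ‖v‖ ^ 2 ≤ (inner ℝ v (fderiv ℝ (gradient Φ) w v) : ℝ) ∧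
        (inner ℝ v (fderiv ℝ (gradient Φ) w v) : ℝ) ≤ c₂ * ‖v‖ ^ 2)
    (w : EuclideanSpace ℝ (Fin d)) (hw : ‖w‖ ≤ m) :
    c₁ * ‖w‖ ^ 2 / 2 ≤ Φ w - Φ 0 ∧ Φ w - Φ 0 ≤ c₂ * ‖w‖ ^ 2 / 2 := by
  have hΦd : Differentiable ℝ Φ := hΦ.differentiable (by norm_num)
  have hGd : Differentiable ℝ (gradient Φ) := by
    have h1 : ContDiff ℝ 1 (fderiv ℝ Φ) := hΦ.fderiv_right (by norm_num)
    have : gradient Φ = fun x => (toDual ℝ (EuclideanSpace ℝ (Fin d))).symm (fderiv ℝ Φ x) := rfl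
    rw [this]
    exact ((toDual ℝ (EuclideanSpace ℝ (Fin d))).symm.toContinuousLinearEquiv :
      _ ≃L[ℝ] _).differentiable.comp (h1.differentiable one_ne_zero)
  set h : ℝ → ℝ := fun s => (inner ℝ w (gradient Φ (s • w)) : ℝ) with hh_def
  have hsmul : ∀ s : ℝ, HasDerivAt (fun u : ℝ => u • w) w s := by
    intro s
    simpa using (hasDerivAt_id s).smul_const w
  have hg : ∀ s : ℝ, HasDerivAt (fun u : ℝ => Φ (u • w)) (h s) s := by
    intro s
    have h1 := ((hΦd (s • w)).hasGradientAt.hasFDerivAt).comp_hasDerivAt s (hsmul s)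
    exact h1.congr_deriv (by rw [toDual_apply_apply]; exact real_inner_comm _ _)
  have hh : ∀ s : ℝ, HasDerivAt h (inner ℝ w (fderiv ℝ (gradient Φ) (s • w) w) : ℝ) s := by
    intro s
    have h1 : HasDerivAt (fun u : ℝ => gradient Φ (u • w)) (fderiv ℝ (gradient Φ) (s • w) w) s :=
      by have := (hGd (s • w)).hasFDerivAt.comp_hasDerivAt s (hsmul s); exact this
    exact ((innerSL ℝ w).hasFDerivAt.comp_hasDerivAt s h1).congr_deriv (innerSL_apply_apply _ _ _)
  have hmem : ∀ s ∈ Set.Icc (0:ℝ) 1, ‖s • w‖ ≤ m := by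
    intro s hs
    rw [norm_smul, Real.norm_eq_abs, abs_of_nonneg hs.1]
    calc s * ‖w‖ ≤ 1 * ‖w‖ := by nlinarith [norm_nonneg w, hs.2]
    _ = ‖w‖ := one_mul _
    _ ≤ m := hw
  have hzero : h 0 = 0 := by simp only [hh_def, zero_smul, hgrad0, inner_zero_right]
  -- upper bound on h : h s ≤ c₂‖w‖² s on [0,1]
  have hub : ∀ s ∈ Set.Icc (0:ℝ) 1, h s ≤ c₂ * ‖w‖ ^ 2 * s := by
    intro s hs
    have := mono_aux (F := fun s => c₂ * ‖w‖ ^ 2 * s - h s)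
      (F' := fun s => c₂ * ‖w‖ ^ 2 - inner ℝ w (fderiv ℝ (gradient Φ) (s • w) w))
      (fun s => ((hasDerivAt_const s _).mul (hasDerivAt_id s)).sub (hh s) |>.congr_deriv (by ring))
      (fun s hsm => sub_nonneg.2 ((hhess _ (hmem s hsm) w).2)) hs
    simp only [mul_zero, hzero, sub_zero] at this
    linarith
  have hlb : ∀ s ∈ Set.Icc (0:ℝ) 1, c₁ * ‖w‖ ^ 2 * s ≤ h s := by
    intro s hs
    have := mono_aux (F := fun s => h s - c₁ * ‖w‖ ^ 2 * s)
      (F' := fun s => (inner ℝ w (fderiv ℝ (gradient Φ) (s • w) w) : ℝ) - c₁ * ‖w‖ ^ 2)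
      (fun s => (hh s).sub ((hasDerivAt_const s _).mul (hasDerivAt_id s)) |>.congr_deriv (by ring))
      (fun s hsm => sub_nonneg.2 ((hhess _ (hmem s hsm) w).1)) hs
    simp only [mul_zero, hzero, sub_zero] at this
    linarith
  constructor
  · have := mono_aux (F := fun s => Φ (s • w) - c₁ * ‖w‖ ^ 2 * (s ^ 2 / 2))
      (F' := fun s => h s - c₁ * ‖w‖ ^ 2 * s)
      (fun s => (hg s).sub (((hasDerivAt_pow 2 s).div_const 2).const_mul _) |>.congr_deriv (by ring))
      (fun s hsm => sub_nonneg.2 (hlb s hsm)) (Set.right_mem_Icc.2 zero_le_one)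
    simp only [zero_smul, one_smul] at this
    nlinarith [this]
  · have := mono_aux (F := fun s => c₂ * ‖w‖ ^ 2 * (s ^ 2 / 2) - Φ (s • w))
      (F' := fun s => c₂ * ‖w‖ ^ 2 * s - h s)
      (fun s => (((hasDerivAt_pow 2 s).div_const 2).const_mul _).sub (hg s) |>.congr_deriv (by ring))
      (fun s hsm => sub_nonneg.2 (hub s hsm)) (Set.right_mem_Icc.2 zero_le_one)
    simp only [zero_smul, one_smul] at this
    nlinarith [this]

end aux

set_option maxHeartbeats 1000000

/-- Gaussian domination at sublinear scales: under the stated Hessian bounds and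
coercivity of `Φ`, `exp(tΦ(y(t)/t) − tΦ(ȳ(t)/t)) → 0` uniformly over
`‖y(t)‖ ≤ r(t)` and `‖ȳ(t)‖ ≥ r̄(t)`. -/
theorem exp_ratio_tendsto_zero (d : ℕ)
    (Φ : EuclideanSpace ℝ (Fin d) → ℝ)
    (hΦ : ContDiff ℝ 2 Φ)
    (hgrad0 : gradient Φ 0 = 0)
    (μ : ℝ) (hμ : 0 < μ) (hΦ0 : Φ 0 = -μ)
    (m c₁ c₂ : ℝ) (hm : 0 < m) (hc₁ : 0 < c₁) (hc₁₂ : c₁ ≤ c₂)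
    (hhess : ∀ w : EuclideanSpace ℝ (Fin d), ‖w‖ ≤ m →
      ∀ v : EuclideanSpace ℝ (Fin d),
        c₁ * ‖v‖ ^ 2 ≤ (inner ℝ v (fderiv ℝ (gradient Φ) w v) : ℝ) ∧
        (inner ℝ v (fderiv ℝ (gradient Φ) w v) : ℝ) ≤ c₂ * ‖v‖ ^ 2)
    (c : ℝ) (hc : 0 < c)
    (hcoer : ∀ v : EuclideanSpace ℝ (Fin d), m ≤ ‖v‖ → c ≤ Φ v - Φ 0)
    (r rbar : ℝ → ℝ)
    (hrpos : ∀ t > 0, 0 < r t) (hrbarpos : ∀ t > 0, 0 < rbar t)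
    (hr : r =o[atTop] rbar)
    (hrbar : rbar =o[atTop] (fun t => t))
    (hsqrt : Tendsto (fun t => Real.sqrt t / rbar t) atTop (𝓝 0)) :
    ∀ ε : ℝ, 0 < ε → ∃ T : ℝ, ∀ t ≥ T,
      ∀ y ybar : EuclideanSpace ℝ (Fin d), ‖y‖ ≤ r t → rbar t ≤ ‖ybar‖ →
        Real.exp (t * Φ (t⁻¹ • y) - t * Φ (t⁻¹ • ybar)) ≤ ε := by
  intro ε hε
  have hc₂ : 0 < c₂ := lt_of_lt_of_le hc₁ hc₁₂
  have hrt : r =o[atTop] (fun t => t) := hr.trans hrbar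
  -- eventual conditions
  have h1 : ∀ᶠ t : ℝ in atTop, (1:ℝ) ≤ t := eventually_ge_atTop 1
  have h2 : ∀ᶠ t : ℝ in atTop, r t ≤ m * t := by
    filter_upwards [hrt.def hm, eventually_gt_atTop (0:ℝ)] with t h ht
    calc r t ≤ |r t| := le_abs_self _
    _ ≤ m * |t| := h
    _ = m * t := by rw [abs_of_pos ht]
  have h3 : ∀ᶠ t : ℝ in atTop, c₂ * (r t)^2 ≤ c₁ * (rbar t)^2 / 2 := by
    have hk : (0:ℝ) < c₁ / (2 * c₂) := by positivity
    filter_upwards [hr.def (Real.sqrt_pos.2 hk)] with t h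
    simp only [Real.norm_eq_abs] at h
    have h2 := mul_self_le_mul_self (abs_nonneg (r t)) h
    have hs := Real.sq_sqrt hk.le
    have hb := Real.sqrt_nonneg (c₁ / (2 * c₂))
    have hr2 : (r t)^2 ≤ c₁ / (2 * c₂) * (rbar t)^2 := by
      nlinarith [sq_abs (r t), sq_abs (rbar t), abs_nonneg (rbar t)]
    calc c₂ * (r t)^2 ≤ c₂ * (c₁ / (2 * c₂) * (rbar t)^2) :=
          mul_le_mul_of_nonneg_left hr2 hc₂.le
    _ = c₁ * (rbar t)^2 / 2 := by field_simp
  have h4 : ∀ᶠ t : ℝ in atTop, c₂ * (r t)^2 ≤ c * t^2 := by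
    have hk : (0:ℝ) < c / c₂ := by positivity
    filter_upwards [hrt.def (Real.sqrt_pos.2 hk)] with t h
    simp only [Real.norm_eq_abs] at h
    have h2 := mul_self_le_mul_self (abs_nonneg (r t)) h
    have hs := Real.sq_sqrt hk.le
    have hb := Real.sqrt_nonneg (c / c₂)
    have hr2 : (r t)^2 ≤ c / c₂ * t^2 := by
      nlinarith [sq_abs (r t), sq_abs t, abs_nonneg t]
    calc c₂ * (r t)^2 ≤ c₂ * (c / c₂ * t^2) := mul_le_mul_of_nonneg_left hr2 hc₂.le
    _ = c * t^2 := by field_simp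
  have h5 : ∀ᶠ t : ℝ in atTop, -(c₁ * (rbar t)^2 / (4 * t)) ≤ Real.log ε := by
    have hpos : ∀ᶠ t : ℝ in atTop, Real.sqrt t / rbar t ∈ Set.Ioi (0:ℝ) := by
      filter_upwards [eventually_gt_atTop (0:ℝ)] with t ht
      exact div_pos (Real.sqrt_pos.2 ht) (hrbarpos t ht)
    have h0 : Tendsto (fun t => Real.sqrt t / rbar t) atTop (𝓝[>] 0) :=
      tendsto_nhdsWithin_iff.2 ⟨hsqrt, hpos⟩
    have hi : Tendsto (fun t => rbar t / Real.sqrt t) atTop atTop := by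
      have := h0.inv_tendsto_nhdsGT_zero
      simpa [Pi.inv_def, inv_div] using this
    have hsq : Tendsto (fun t => (rbar t)^2 / t) atTop atTop := by
      have hmul := hi.atTop_mul_atTop₀ hi
      apply hmul.congr'
      filter_upwards [eventually_gt_atTop (0:ℝ)] with t ht
      rw [div_mul_div_comm, ← sq, ← sq, Real.sq_sqrt ht.le]
    filter_upwards [hsq.eventually_ge_atTop ((-Real.log ε) * (4 / c₁)),
      eventually_gt_atTop (0:ℝ)] with t h ht
    have he : c₁ / 4 * ((rbar t)^2 / t) = c₁ * (rbar t)^2 / (4 * t) := by ring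
    have he2 : c₁ / 4 * ((-Real.log ε) * (4 / c₁)) = -Real.log ε := by field_simp
    have := mul_le_mul_of_nonneg_left h (by positivity : (0:ℝ) ≤ c₁ / 4)
    linarith
  have h6 : ∀ᶠ t : ℝ in atTop, -(c * t / 2) ≤ Real.log ε := by
    filter_upwards [eventually_ge_atTop ((-Real.log ε) * (2 / c))] with t h
    have he2 : c / 2 * ((-Real.log ε) * (2 / c)) = -Real.log ε := by field_simp
    have := mul_le_mul_of_nonneg_left h (by positivity : (0:ℝ) ≤ c / 2)
    nlinarith
  obtain ⟨T, hT⟩ := eventually_atTop.mp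
    (((((h1.and h2).and h3).and h4).and h5).and h6)
  refine ⟨T, fun t ht y ybar hy hybar => ?_⟩
  obtain ⟨⟨⟨⟨⟨ht1, ht2⟩, ht3⟩, ht4⟩, ht5⟩, ht6⟩ := hT t ht
  have htpos : (0:ℝ) < t := lt_of_lt_of_le one_pos ht1
  have hrtpos := hrpos t htpos
  have hrbpos := hrbarpos t htpos
  have hnorm : ∀ z : EuclideanSpace ℝ (Fin d), ‖t⁻¹ • z‖ = ‖z‖ / t := by
    intro z
    rw [norm_smul, norm_inv, Real.norm_eq_abs, abs_of_pos htpos, inv_mul_eq_div]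
  -- upper bound from y
  have hwm : ‖t⁻¹ • y‖ ≤ m := by
    rw [hnorm]
    exact (div_le_iff₀ htpos).2 (hy.trans ht2)
  have hup : t * Φ (t⁻¹ • y) ≤ t * Φ 0 + c₂ * (r t)^2 / (2 * t) := by
    have h := (taylor_bounds Φ hΦ hgrad0 m c₁ c₂ hhess (t⁻¹ • y) hwm).2
    rw [hnorm] at h
    have hA : (‖y‖ / t)^2 ≤ (r t / t)^2 :=
      pow_le_pow_left₀ (by positivity) (div_le_div_of_nonneg_right hy htpos.le) 2
    have he : t * (c₂ * (r t / t)^2 / 2) = c₂ * (r t)^2 / (2 * t) := by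
      field_simp
    nlinarith [mul_le_mul_of_nonneg_left h htpos.le,
      mul_le_mul_of_nonneg_left hA (by positivity : (0:ℝ) ≤ t * c₂ / 2)]
  -- bound on exponent then conclude
  have key : t * Φ (t⁻¹ • y) - t * Φ (t⁻¹ • ybar) ≤ Real.log ε := by
    rcases le_or_gt m ‖t⁻¹ • ybar‖ with hbig | hsmall
    · -- coercivity case
      have hco := hcoer _ hbig
      have hlow : t * Φ 0 + c * t ≤ t * Φ (t⁻¹ • ybar) := by
        nlinarith [mul_le_mul_of_nonneg_left hco htpos.le]
      have hq : c₂ * (r t)^2 / (2 * t) ≤ c * t / 2 := by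
        rw [div_le_div_iff₀ (by positivity) (by norm_num)]
        nlinarith
      linarith
    · -- quadratic case
      have h := (taylor_bounds Φ hΦ hgrad0 m c₁ c₂ hhess (t⁻¹ • ybar) hsmall.le).1
      rw [hnorm] at h
      have hB : (rbar t / t)^2 ≤ (‖ybar‖ / t)^2 :=
        pow_le_pow_left₀ (by positivity) (div_le_div_of_nonneg_right hybar htpos.le) 2
      have hlow : t * Φ 0 + c₁ * (rbar t)^2 / (2 * t) ≤ t * Φ (t⁻¹ • ybar) := by
        have he : t * (c₁ * (rbar t / t)^2 / 2) = c₁ * (rbar t)^2 / (2 * t) := by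
          field_simp
        nlinarith [mul_le_mul_of_nonneg_left h htpos.le,
          mul_le_mul_of_nonneg_left hB (by positivity : (0:ℝ) ≤ t * c₁ / 2)]
      have hq : c₂ * (r t)^2 / (2 * t) ≤ c₁ * (rbar t)^2 / (4 * t) := by
        rw [div_le_div_iff₀ (by positivity) (by positivity)]
        nlinarith
      have hq2 : c₁ * (rbar t)^2 / (4 * t) - c₁ * (rbar t)^2 / (2 * t)
          = -(c₁ * (rbar t)^2 / (4 * t)) := by ring
      linarith
  calc Real.exp (t * Φ (t⁻¹ • y) - t * Φ (t⁻¹ • ybar)) ≤ Real.exp (Real.log ε) :=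
        Real.exp_le_exp.2 key
  _ = ε := Real.exp_log hε
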